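/- Along any solution (m, n, e) of the magnetic rod equations, the quantity C₂ = e·n is constant in t (its derivative vanishes identically). -/

import Mathlib

open Matrix Real

local notation:74 a:74 " ×₃ " b:75 => crossProduct a b

/-- Along any solution `(m, n, e)` of the magnetic rod equations,
the Casimir `C₂ = e·n` is constant in `t`: its derivative vanishes identically. -/
theorem casimir_C2_conserved
    (B₁ B₂ C H J K lam : ℝ)
    (hB₁ : 0 < B₁) (hB₂ : 0 < B₂) (hC : 0 < C) (hH : 0 < H) (hJ : 0 < J) (hK : 0 < K)
    (m n e : ℝ → Fin 3 → ℝ)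
    (hm : Differentiable ℝ m) (hn : Differentiable ℝ n) (he : Differentiable ℝ e)
    (u : ℝ → Fin 3 → ℝ) (hu : ∀ t, u t = ![m t 0 / B₁, m t 1 / B₂, m t 2 / C])
    (w : ℝ → Fin 3 → ℝ) (hw : ∀ t, w t = ![n t 0 / H, n t 1 / J, 1 + n t 2 / K])
    (heqm : ∀ t, deriv m t = m t ×₃ u t + n t ×₃ w t)
    (heqn : ∀ t, deriv n t = n t ×₃ u t + lam • (e t ×₃ w t))
    (heqe : ∀ t, deriv e t = e t ×₃ u t) :
    ∀ t, deriv (fun t => e t ⬝ᵥ n t) t = 0 := by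
  intro t
  have he' : ∀ i, HasDerivAt (fun t => e t i) (deriv e t i) t :=
    hasDerivAt_pi.mp (he t).hasDerivAt
  have hn' : ∀ i, HasDerivAt (fun t => n t i) (deriv n t i) t :=
    hasDerivAt_pi.mp (hn t).hasDerivAt
  have hD : HasDerivAt (fun t => e t ⬝ᵥ n t)
      ((deriv e t 0 * n t 0 + e t 0 * deriv n t 0)
        + (deriv e t 1 * n t 1 + e t 1 * deriv n t 1)
        + (deriv e t 2 * n t 2 + e t 2 * deriv n t 2)) t := by
    have : HasDerivAt (fun t => e t 0 * n t 0 + e t 1 * n t 1 + e t 2 * n t 2)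
        ((deriv e t 0 * n t 0 + e t 0 * deriv n t 0)
        + (deriv e t 1 * n t 1 + e t 1 * deriv n t 1)
        + (deriv e t 2 * n t 2 + e t 2 * deriv n t 2)) t :=
      (((he' 0).mul (hn' 0)).add ((he' 1).mul (hn' 1))).add ((he' 2).mul (hn' 2))
    convert this using 2 with s
    simp [dotProduct, Fin.sum_univ_three]
  rw [hD.deriv]
  have hE := heqe t
  have hN := heqn t
  have hE0 := congrFun hE 0
  have hE1 := congrFun hE 1
  have hE2 := congrFun hE 2
  have hN0 := congrFun hN 0
  have hN1 := congrFun hN 1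
  have hN2 := congrFun hN 2
  simp only [crossProduct, hu, hw, Pi.add_apply, Pi.smul_apply, smul_eq_mul,
    LinearMap.mk₂_apply, Matrix.cons_val_zero, Matrix.cons_val_one, Matrix.head_cons,
    Matrix.cons_val_two, Matrix.tail_cons] at hE0 hE1 hE2 hN0 hN1 hN2
  rw [hE0, hE1, hE2, hN0, hN1, hN2]
  ring
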